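/- Let X be a regular topological space and let k be a positive integer. If X is selectively k-star-ccc, then X has the discrete countable chain condition (DCCC). -/
import Mathlib


open Set

namespace SelStar

variable {X : Type*}

/-- The star of a set `A` with respect to a family `𝒰`:
`st(A,𝒰) = ⋃ {U ∈ 𝒰 : U ∩ A ≠ ∅}`. -/
def st (𝒰 : Set (Set X)) (A : Set X) : Set X :=
  ⋃₀ {u ∈ 𝒰 | (u ∩ A).Nonempty}

/-- Iterated star: `stIter 𝒰 A n = st^n(A,𝒰)`, with `st^0(A,𝒰) = A`. -/
def stIter (𝒰 : Set (Set X)) (A : Set X) : ℕ → Set X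
  | 0 => A
  | n + 1 => st 𝒰 (stIter 𝒰 A n)

/-- `𝒰` is an open cover of `X`. -/
def IsOpenCover [TopologicalSpace X] (𝒰 : Set (Set X)) : Prop :=
  (∀ u ∈ 𝒰, IsOpen u) ∧ ⋃₀ 𝒰 = univ

/-- A cellular family: a family of nonempty pairwise disjoint open sets. -/
def Cellular [TopologicalSpace X] (𝒜 : Set (Set X)) : Prop :=
  (∀ A ∈ 𝒜, IsOpen A ∧ A.Nonempty) ∧ 𝒜.Pairwise Disjoint

/-- A maximal cellular family: a cellular family not properly contained in
any other cellular family. -/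
def MaximalCellular [TopologicalSpace X] (𝒜 : Set (Set X)) : Prop :=
  Cellular 𝒜 ∧ ∀ ℬ : Set (Set X), Cellular ℬ → 𝒜 ⊆ ℬ → ℬ = 𝒜

/-- `X` is selectively `k`-star-ccc. -/
def SelectivelyKStarCCC (X : Type*) [TopologicalSpace X] (k : ℕ) : Prop :=
  ∀ 𝒰 : Set (Set X), IsOpenCover 𝒰 →
    ∀ 𝒜 : ℕ → Set (Set X), (∀ n, MaximalCellular (𝒜 n)) →
      ∃ A : ℕ → Set X, (∀ n, A n ∈ 𝒜 n) ∧ stIter 𝒰 (⋃ n, A n) k = univ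

/-- `X` is `k`-star-Lindelöf. -/
def KStarLindelof (X : Type*) [TopologicalSpace X] (k : ℕ) : Prop :=
  ∀ 𝒰 : Set (Set X), IsOpenCover 𝒰 →
    ∃ 𝒱 ⊆ 𝒰, 𝒱.Countable ∧ stIter 𝒰 (⋃₀ 𝒱) k = univ

/-- The countable chain condition: every cellular family is countable. -/
def CCC (X : Type*) [TopologicalSpace X] : Prop :=
  ∀ 𝒜 : Set (Set X), Cellular 𝒜 → 𝒜.Countable

/-- `X` is weakly Lindelöf. -/
def WeaklyLindelof (X : Type*) [TopologicalSpace X] : Prop :=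
  ∀ 𝒰 : Set (Set X), IsOpenCover 𝒰 →
    ∃ 𝒱 ⊆ 𝒰, 𝒱.Countable ∧ Dense (⋃₀ 𝒱)

/-- `X` is `ω`-star-Lindelöf. -/
def OmegaStarLindelof (X : Type*) [TopologicalSpace X] : Prop :=
  ∀ 𝒰 : Set (Set X), IsOpenCover 𝒰 →
    ∃ k : ℕ, 0 < k ∧ ∃ 𝒱 ⊆ 𝒰, 𝒱.Countable ∧ stIter 𝒰 (⋃₀ 𝒱) k = univ

/-- `X` is selectively `ω`-star-ccc. -/
def SelectivelyOmegaStarCCC (X : Type*) [TopologicalSpace X] : Prop :=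
  ∀ 𝒰 : Set (Set X), IsOpenCover 𝒰 →
    ∀ 𝒜 : ℕ → Set (Set X), (∀ n, MaximalCellular (𝒜 n)) →
      ∃ A : ℕ → Set X, (∀ n, A n ∈ 𝒜 n) ∧
        ∃ k : ℕ, 0 < k ∧ stIter 𝒰 (⋃ n, A n) k = univ

/-- A discrete family: every point has a neighborhood meeting at most one member. -/
def DiscreteFamily (X : Type*) [TopologicalSpace X] (𝒜 : Set (Set X)) : Prop :=
  ∀ x : X, ∃ N ∈ nhds x, {A ∈ 𝒜 | (A ∩ N).Nonempty}.Subsingleton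

/-- The discrete countable chain condition: every discrete family of nonempty
open sets is countable. -/
def DCCC (X : Type*) [TopologicalSpace X] : Prop :=
  ∀ 𝒜 : Set (Set X), (∀ A ∈ 𝒜, IsOpen A ∧ A.Nonempty) →
    DiscreteFamily X 𝒜 → 𝒜.Countable

/-- `X` is weakly strongly star-Lindelöf (weakly star countable). -/
def WeaklySSL (X : Type*) [TopologicalSpace X] : Prop :=
  ∀ 𝒰 : Set (Set X), IsOpenCover 𝒰 →
    ∃ A : Set X, A.Countable ∧ Dense (st 𝒰 A)

/-- `X` is strongly `1`-star-Lindelöf (SSL). -/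
def SSL (X : Type*) [TopologicalSpace X] : Prop :=
  ∀ 𝒰 : Set (Set X), IsOpenCover 𝒰 →
    ∃ A : Set X, A.Countable ∧ st 𝒰 A = univ

/-- `X` is selectively ccc. -/
def SelectivelyCCC (X : Type*) [TopologicalSpace X] : Prop :=
  ∀ 𝒜 : ℕ → Set (Set X), (∀ n, MaximalCellular (𝒜 n)) →
    ∃ A : ℕ → Set X, (∀ n, A n ∈ 𝒜 n) ∧ Dense (⋃ n, A n)

/-- `X` is countably compact: every countable open cover has a finite subcover. -/
def CountablyCompact (X : Type*) [TopologicalSpace X] : Prop :=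
  ∀ 𝒰 : Set (Set X), 𝒰.Countable → IsOpenCover 𝒰 →
    ∃ ℱ ⊆ 𝒰, ℱ.Finite ∧ ⋃₀ ℱ = univ

end SelStar

namespace SelStar
variable {X : Type*} [TopologicalSpace X]

variable {X : Type*} [TopologicalSpace X]

lemma reg_aux [RegularSpace X] {s : Set X} (hs : IsOpen s) {a : X} (ha : a ∈ s) :
    ∃ t : Set X, IsOpen t ∧ a ∈ t ∧ closure t ⊆ s := by
  rcases (closed_nhds_basis a).mem_iff.mp (hs.mem_nhds ha) with ⟨t, ⟨ht, htc⟩, hts⟩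
  exact ⟨interior t, isOpen_interior, mem_interior_iff_mem_nhds.2 ht,
    (closure_minimal interior_subset htc).trans hts⟩

lemma chain_exists [RegularSpace X] {A : Set X} (hA : IsOpen A) (hne : A.Nonempty) :
    ∃ V : ℕ → Set X, V 0 = A ∧ ∀ i, IsOpen (V i) ∧ (V i).Nonempty ∧ closure (V (i+1)) ⊆ V i := by
  obtain ⟨x, hx⟩ := hne
  let T := {p : Set X // IsOpen p ∧ x ∈ p}
  have step : ∀ p : T, ∃ q : T, closure q.1 ⊆ p.1 := fun p => by
    rcases reg_aux p.2.1 p.2.2 with ⟨t, ht, hxt, hcl⟩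
    exact ⟨⟨t, ht, hxt⟩, hcl⟩
  choose f hf using step
  refine ⟨fun n => (f^[n] ⟨A, hA, hx⟩).1, by simp, fun i => ⟨(f^[i] ⟨A, hA, hx⟩).2.1,
    ⟨x, (f^[i] ⟨A, hA, hx⟩).2.2⟩, ?_⟩⟩
  simp only [Function.iterate_succ_apply']
  exact hf _

lemma exists_maximalCellular {𝒜 : Set (Set X)} (h : Cellular 𝒜) :
    ∃ ℬ, MaximalCellular ℬ ∧ 𝒜 ⊆ ℬ := by
  have hzorn : ∀ c ⊆ {C : Set (Set X) | Cellular C}, IsChain (· ⊆ ·) c → c.Nonempty →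
      ∃ ub ∈ {C : Set (Set X) | Cellular C}, ∀ s ∈ c, s ⊆ ub := by
    intro c hc hchain hne
    refine ⟨⋃₀ c, ⟨fun A hA => ?_, fun A hA B hB hAB => ?_⟩, fun s hs => subset_sUnion_of_mem hs⟩
    · obtain ⟨s, hsc, hAs⟩ := hA
      exact (hc hsc).1 A hAs
    · obtain ⟨s, hsc, hAs⟩ := hA
      obtain ⟨t, htc, hBt⟩ := hB
      rcases hchain.total hsc htc with hst | hts
      · exact (hc htc).2 (hst hAs) hBt hAB
      · exact (hc hsc).2 hAs (hts hBt) hAB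
  obtain ⟨m, hsub, hm⟩ := zorn_subset_nonempty {C : Set (Set X) | Cellular C} hzorn 𝒜 h
  exact ⟨m, ⟨hm.1, fun ℬ hℬ hmB => hm.eq_of_ge hℬ hmB⟩, hsub⟩


lemma exists_boundary {Q : ℕ → Prop} (h0 : Q 0) (hm : ∃ m, ¬ Q m) :
    ∃ n, Q n ∧ ¬ Q (n+1) := by
  classical
  have hpos : 0 < Nat.find hm := Nat.pos_of_ne_zero (by
    intro h0'; exact (h0' ▸ Nat.find_spec hm) h0)
  refine ⟨Nat.find hm - 1, ?_, ?_⟩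
  · have := Nat.find_min hm (Nat.sub_lt hpos one_pos)
    exact not_not.mp this
  · rw [Nat.sub_add_cancel hpos]
    exact Nat.find_spec hm
end SelStar

open SelStar

/-- In regular spaces, every selectively `k`-star-ccc space has the DCCC. -/
theorem selectively_k_star_ccc_implies_dccc_of_regular
    (X : Type*) [TopologicalSpace X] [RegularSpace X] (k : ℕ) (hk : 0 < k)
    (h : SelectivelyKStarCCC X k) : DCCC X := by
  clear hk -- `hk` is not needed: the argument works for every k
  intro 𝒟 h_on h_disc
  by_contra hunc
  -- pairwise disjointness of a discrete family
  have hdj : ∀ ⦃A⦄, A ∈ 𝒟 → ∀ ⦃B⦄, B ∈ 𝒟 → A ≠ B → Disjoint A B := by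
    intro A hA B hB hAB
    rw [Set.disjoint_left]
    intro x hxA hxB
    obtain ⟨N, hN, hsub⟩ := h_disc x
    exact hAB (hsub ⟨hA, x, hxA, mem_of_mem_nhds hN⟩ ⟨hB, x, hxB, mem_of_mem_nhds hN⟩)
  -- choose shrinking chains inside each member
  have hch : ∀ A ∈ 𝒟, ∃ V : ℕ → Set X, V 0 = A ∧
      ∀ i, IsOpen (V i) ∧ (V i).Nonempty ∧ closure (V (i+1)) ⊆ V i :=
    fun A hA => chain_exists (h_on A hA).1 (h_on A hA).2
  choose! V hV0 hV using hch
  have hVmono : ∀ A ∈ 𝒟, ∀ i j, i ≤ j → V A j ⊆ V A i := by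
    intro A hA i j hij
    induction j, hij using Nat.le_induction with
    | base => exact subset_rfl
    | succ n hn ih => exact (subset_closure.trans (hV A hA n).2.2).trans ih
  set U : Set X → ℕ → Set X := fun A i => if i ≤ k then V A i else ∅ with hU
  have hU0 : ∀ A ∈ 𝒟, U A 0 = A := by
    intro A hA; simp only [hU, if_pos (Nat.zero_le k)]; exact hV0 A hA
  have hUVsub : ∀ A i, U A i ⊆ V A i := by
    intro A i; by_cases hik : i ≤ k <;> simp [hU, hik]
  have hUopen : ∀ A ∈ 𝒟, ∀ i, IsOpen (U A i) := by
    intro A hA i; by_cases hik : i ≤ k <;> simp [hU, hik]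
    exact (hV A hA i).1
  have hUmono : ∀ A ∈ 𝒟, ∀ i j, i ≤ j → U A j ⊆ U A i := by
    intro A hA i j hij
    by_cases hjk : j ≤ k
    · simp only [hU, if_pos hjk, if_pos (hij.trans hjk)]
      exact hVmono A hA i j hij
    · simp [hU, hjk]
  have hUcl : ∀ A ∈ 𝒟, ∀ i, closure (U A (i+1)) ⊆ U A i := by
    intro A hA i
    by_cases hik : i + 1 ≤ k
    · simp only [hU, if_pos hik, if_pos (Nat.le_of_succ_le hik : i ≤ k)]
      exact (hV A hA i).2.2
    · simp [hU, hik]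
  have hUsubA : ∀ A ∈ 𝒟, ∀ i, U A i ⊆ A := by
    intro A hA i
    refine (hUVsub A i).trans ?_
    have := hVmono A hA 0 i (Nat.zero_le i)
    rwa [hV0 A hA] at this
  have hUk : ∀ A ∈ 𝒟, (U A k).Nonempty := by
    intro A hA; simp only [hU, if_pos le_rfl]; exact (hV A hA k).2.1
  -- the open cover
  set W : Set X := (⋃ A ∈ 𝒟, closure (U A 1))ᶜ with hWdef
  set L : Set X → ℕ → Set X := fun A i => U A i \ closure (U A (i+2)) with hL
  set 𝒰 : Set (Set X) := insert W {u | ∃ A ∈ 𝒟, ∃ i, u = L A i} with h𝒰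
  have hWopen : IsOpen W := by
    rw [isOpen_iff_mem_nhds]
    intro x hx
    obtain ⟨N, hN, hsub⟩ := h_disc x
    by_cases hex : ∃ A₀ ∈ 𝒟, (A₀ ∩ interior N).Nonempty
    · obtain ⟨A₀, hA₀, hmeet⟩ := hex
      have hxnc : x ∉ closure (U A₀ 1) := by
        intro hc
        exact hx (mem_biUnion hA₀ hc)
      refine Filter.mem_of_superset
        (((isOpen_interior.sdiff isClosed_closure).mem_nhds
          ⟨mem_interior_iff_mem_nhds.2 hN, hxnc⟩)) ?_
      intro y hy hyU
      simp only [mem_iUnion, exists_prop] at hyU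
      obtain ⟨B, hB𝒟, hys⟩ := hyU
      have hyB : y ∈ B := hU0 B hB𝒟 ▸ hUcl B hB𝒟 0 hys
      have hBeq : B = A₀ := by
        refine hsub ⟨hB𝒟, y, hyB, interior_subset hy.1⟩ ?_
        obtain ⟨z, hz⟩ := hmeet
        exact ⟨hA₀, z, hz.1, interior_subset hz.2⟩
      exact hy.2 (hBeq ▸ hys)
    · push_neg at hex
      refine Filter.mem_of_superset (isOpen_interior.mem_nhds
        (mem_interior_iff_mem_nhds.2 hN)) ?_
      intro y hy hyU
      simp only [mem_iUnion, exists_prop] at hyU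
      obtain ⟨B, hB𝒟, hys⟩ := hyU
      have hyB : y ∈ B := hU0 B hB𝒟 ▸ hUcl B hB𝒟 0 hys
      exact (Set.eq_empty_iff_forall_notMem.mp (hex B hB𝒟)) y ⟨hyB, hy⟩
  have hcover : IsOpenCover 𝒰 := by
    constructor
    · rintro u hu
      rcases hu with rfl | ⟨A, hA, i, rfl⟩
      · exact hWopen
      · exact (hUopen A hA i).sdiff isClosed_closure
    · apply eq_univ_of_forall
      intro x
      by_cases hxW : x ∈ W
      · exact ⟨W, mem_insert _ _, hxW⟩
      · rw [hWdef, mem_compl_iff, not_not] at hxW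
        simp only [mem_iUnion, exists_prop] at hxW
        obtain ⟨A, hA𝒟, hxs⟩ := hxW
        have hx0 : x ∈ U A 0 := hUcl A hA𝒟 0 hxs
        have hxk : ¬ x ∈ U A (k+1) := by
          simp [hU, Nat.lt_irrefl, Nat.not_succ_le_self]
        obtain ⟨n, hxn, hxn1⟩ := exists_boundary (Q := fun n => x ∈ U A n) hx0 ⟨k+1, hxk⟩
        refine ⟨L A n, Or.inr ⟨A, hA𝒟, n, rfl⟩, hxn, fun hc => ?_⟩
        exact hxn1 (hUcl A hA𝒟 (n+1) hc)
  -- maximal cellular family extending 𝒟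
  obtain ⟨ℬ, hℬmax, h𝒟ℬ⟩ := exists_maximalCellular ⟨h_on, fun A hA B hB hne => hdj hA hB hne⟩
  obtain ⟨f, hf, hst⟩ := h 𝒰 hcover (fun _ => ℬ) (fun _ => hℬmax)
  -- pick a member of 𝒟 missed by the selection
  have hD : ∃ D ∈ 𝒟, ∀ n, f n ≠ D := by
    by_contra hc
    push_neg at hc
    exact hunc ((countable_range f).mono fun D hD => hc D hD)
  obtain ⟨D, hD𝒟, hfD⟩ := hD
  have hfdisj : ∀ n, Disjoint (f n) D :=
    fun n => hℬmax.1.2 (hf n) (h𝒟ℬ hD𝒟) (hfD n)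
  -- the crucial star step
  have hstar : ∀ (S : Set X) (i : ℕ), Disjoint S (U D i) → Disjoint (st 𝒰 S) (U D (i+1)) := by
    intro S i hS
    rw [Set.disjoint_left]
    intro x hxst hxU
    obtain ⟨u, hu, hxu⟩ := hxst
    obtain ⟨hu𝒰, hune⟩ := hu
    rcases hu𝒰 with rfl | ⟨B, hB𝒟, j, rfl⟩
    · -- u = W
      have : x ∈ closure (U D 1) :=
        subset_closure (hUmono D hD𝒟 1 (i+1) (Nat.succ_le_succ (Nat.zero_le i)) hxU)
      exact hxu (mem_biUnion hD𝒟 this)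
    · by_cases hBD : B = D
      · subst hBD
        by_cases hji : i ≤ j
        · obtain ⟨z, hzu, hzS⟩ := hune
          exact Set.disjoint_left.mp hS hzS (hUmono B hB𝒟 i j hji hzu.1)
        · push_neg at hji
          have : x ∈ closure (U B (j+2)) :=
            subset_closure (hUmono B hB𝒟 (j+2) (i+1) (by omega) hxU)
          exact hxu.2 this
      · exact Set.disjoint_left.mp (hdj hB𝒟 hD𝒟 hBD)
          (hUsubA B hB𝒟 j hxu.1) (hUsubA D hD𝒟 (i+1) hxU)
  have hind : ∀ n, Disjoint (stIter 𝒰 (⋃ n, f n) n) (U D n) := by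
    intro n
    induction n with
    | zero =>
      rw [hU0 D hD𝒟]
      exact Set.disjoint_iUnion_left.mpr hfdisj
    | succ n ih => exact hstar _ n ih
  have := hind k
  rw [hst] at this
  exact (hUk D hD𝒟).ne_empty (Set.univ_disjoint.mp this)
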